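/- Let γ = [0; 1, 1, c_3, 1, c_5, 1, c_7, …] be irrational with c_{2n+1} ∈ {1, 2} for all n ≥ 1 (and all even-index partial quotients after c_2, plus c_1, c_2, equal to 1). If m ∈ ℕ is such that ⌊mγ⌋/m is not a convergent of γ, then m(mγ - ⌊mγ⌋) > 1. -/

import Mathlib

/-- Numerator of the `n`-th convergent of the continued fraction with
partial quotients `c`. -/
def convP (c : ℕ → ℤ) : ℕ → ℤ
  | 0 => c 0
  | 1 => c 1 * c 0 + 1
  | (n + 2) => c (n + 2) * convP c (n + 1) + convP c n

/-- Denominator of the `n`-th convergent of the continued fraction with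
partial quotients `c`. -/
def convQ (c : ℕ → ℤ) : ℕ → ℤ
  | 0 => 1
  | 1 => c 1
  | (n + 2) => c (n + 2) * convQ c (n + 1) + convQ c n

/-- `γ` has (infinite) continued fraction expansion `[c 0; c 1, c 2, ...]`:
all partial quotients with positive index are positive integers, and the
convergents tend to `γ`. -/
def IsCF (γ : ℝ) (c : ℕ → ℤ) : Prop :=
  (∀ n, 1 ≤ n → 1 ≤ c n) ∧
  Filter.Tendsto (fun n => (convP c n : ℝ) / (convQ c n : ℝ)) Filter.atTop (nhds γ)

lemma cf_det (c : ℕ → ℤ) : ∀ n, convP c (n+1) * convQ c n - convP c n * convQ c (n+1) = (-1)^n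
  | 0 => by simp [convP, convQ]; ring
  | (n+1) => by
      have ih := cf_det c n
      show convP c (n+2) * convQ c (n+1) - convP c (n+1) * convQ c (n+2) = _
      simp only [convP, convQ]
      linear_combination (-1 : ℤ) * ih

lemma cf_det2 (c : ℕ → ℤ) (n : ℕ) :
    convP c (n+2) * convQ c n - convP c n * convQ c (n+2) = c (n+2) * (-1)^n := by
  have := cf_det c n
  show (c (n+2) * convP c (n+1) + convP c n) * convQ c n -
      convP c n * (c (n+2) * convQ c (n+1) + convQ c n) = _
  linear_combination c (n+2) * this

lemma cf_Qaux (c : ℕ → ℤ) (hc : ∀ n, 1 ≤ n → 1 ≤ c n) :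
    ∀ n, 1 ≤ convQ c n ∧ convQ c n ≤ convQ c (n+1) ∧ (n : ℤ) ≤ convQ c n := by
  have key : ∀ n, (1 ≤ convQ c n ∧ (n:ℤ) ≤ convQ c n) ∧
      (1 ≤ convQ c (n+1) ∧ ((n:ℤ)+1) ≤ convQ c (n+1)) ∧ convQ c n ≤ convQ c (n+1) := by
    intro n
    induction n with
    | zero =>
      have h1 : (1:ℤ) ≤ c 1 := hc 1 le_rfl
      refine ⟨⟨le_rfl, by norm_num [convQ]⟩, ⟨?_, ?_⟩, ?_⟩ <;>
        simp [convQ] <;> omega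
    | succ n ih =>
      obtain ⟨⟨h1, h2⟩, ⟨h3, h4⟩, h5⟩ := ih
      have hcn : 1 ≤ c (n+2) := hc (n+2) (by omega)
      have hQ : convQ c (n+2) = c (n+2) * convQ c (n+1) + convQ c n := rfl
      have hstep : convQ c (n+1) + convQ c n ≤ convQ c (n+2) := by
        rw [hQ]; nlinarith
      refine ⟨⟨h3, h4⟩, ⟨?_, ?_⟩, ?_⟩
      · show 1 ≤ convQ c (n+2); omega
      · show ((n+1:ℕ):ℤ) + 1 ≤ convQ c (n+2); push_cast; omega
      · show convQ c (n+1) ≤ convQ c (n+2); omega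
  intro n
  exact ⟨(key n).1.1, (key n).2.2, (key n).1.2⟩

lemma cf_Qpos (c : ℕ → ℤ) (hc : ∀ n, 1 ≤ n → 1 ≤ c n) (n : ℕ) : 1 ≤ convQ c n :=
  (cf_Qaux c hc n).1

lemma cf_Qmono (c : ℕ → ℤ) (hc : ∀ n, 1 ≤ n → 1 ≤ c n) (n : ℕ) :
    convQ c n ≤ convQ c (n+1) := (cf_Qaux c hc n).2.1

lemma cf_Qge (c : ℕ → ℤ) (hc : ∀ n, 1 ≤ n → 1 ≤ c n) (n : ℕ) :
    (n : ℤ) ≤ convQ c n := (cf_Qaux c hc n).2.2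

lemma convQ_rec (c : ℕ → ℤ) (n : ℕ) :
    convQ c (n+2) = c (n+2) * convQ c (n+1) + convQ c n := rfl

section Between

variable {γ : ℝ} {c : ℕ → ℤ} (hc : ∀ n, 1 ≤ n → 1 ≤ c n)
  (htend : Filter.Tendsto (fun n => (convP c n : ℝ) / (convQ c n : ℝ))
    Filter.atTop (nhds γ))

include hc htend

lemma cf_even_lt (k : ℕ) : (convP c (2*k) : ℝ) / (convQ c (2*k) : ℝ) < γ := by
  have hQR : ∀ n, (0:ℝ) < (convQ c n : ℝ) := fun n => by
    exact_mod_cast lt_of_lt_of_le one_pos (by exact_mod_cast cf_Qpos c hc n)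
  have hstep : ∀ k : ℕ, (convP c (2*k) : ℝ) / (convQ c (2*k) : ℝ) <
      (convP c (2*k+2) : ℝ) / (convQ c (2*k+2) : ℝ) := by
    intro k
    rw [div_lt_div_iff₀ (hQR _) (hQR _)]
    have h := cf_det2 c (2*k)
    have hpow : ((-1:ℤ))^(2*k) = 1 := by
      rw [pow_mul]; norm_num
    rw [hpow, mul_one] at h
    have hck : 1 ≤ c (2*k+2) := hc _ (by omega)
    have : convP c (2*k) * convQ c (2*k+2) < convP c (2*k+2) * convQ c (2*k) := by omega
    exact_mod_cast this
  have hmono : Monotone (fun k => (convP c (2*k) : ℝ) / (convQ c (2*k) : ℝ)) := by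
    apply monotone_nat_of_le_succ
    intro k
    have := (hstep k).le
    simpa [show 2*(k+1) = 2*k+2 by ring] using this
  have h2 : Filter.Tendsto (fun k : ℕ => 2*k) Filter.atTop Filter.atTop :=
    Filter.tendsto_atTop_atTop.mpr (fun b => ⟨b, fun a ha => by omega⟩)
  have hsub : Filter.Tendsto (fun k => (convP c (2*k) : ℝ) / (convQ c (2*k) : ℝ))
      Filter.atTop (nhds γ) := htend.comp h2
  have hle : (convP c (2*(k+1)) : ℝ) / (convQ c (2*(k+1)) : ℝ) ≤ γ :=
    hmono.ge_of_tendsto hsub (k+1)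
  calc (convP c (2*k) : ℝ) / (convQ c (2*k) : ℝ)
      < (convP c (2*k+2) : ℝ) / (convQ c (2*k+2) : ℝ) := hstep k
    _ ≤ γ := by simpa [show 2*(k+1) = 2*k+2 by ring] using hle

lemma cf_odd_gt (k : ℕ) : γ < (convP c (2*k+1) : ℝ) / (convQ c (2*k+1) : ℝ) := by
  have hQR : ∀ n, (0:ℝ) < (convQ c n : ℝ) := fun n => by
    exact_mod_cast lt_of_lt_of_le one_pos (by exact_mod_cast cf_Qpos c hc n)
  have hstep : ∀ k : ℕ, (convP c (2*k+3) : ℝ) / (convQ c (2*k+3) : ℝ) <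
      (convP c (2*k+1) : ℝ) / (convQ c (2*k+1) : ℝ) := by
    intro k
    rw [div_lt_div_iff₀ (hQR _) (hQR _)]
    have h := cf_det2 c (2*k+1)
    have hpow : ((-1:ℤ))^(2*k+1) = -1 := by
      rw [pow_succ, pow_mul]; norm_num
    rw [hpow] at h
    have hck : 1 ≤ c (2*k+3) := hc _ (by omega)
    have : convP c (2*k+3) * convQ c (2*k+1) < convP c (2*k+1) * convQ c (2*k+3) := by
      nlinarith
    exact_mod_cast this
  have hanti : Antitone (fun k => (convP c (2*k+1) : ℝ) / (convQ c (2*k+1) : ℝ)) := by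
    apply antitone_nat_of_succ_le
    intro k
    have := (hstep k).le
    simpa [show 2*(k+1)+1 = 2*k+3 by ring] using this
  have h2 : Filter.Tendsto (fun k : ℕ => 2*k+1) Filter.atTop Filter.atTop :=
    Filter.tendsto_atTop_atTop.mpr (fun b => ⟨b, fun a ha => by omega⟩)
  have hsub : Filter.Tendsto (fun k => (convP c (2*k+1) : ℝ) / (convQ c (2*k+1) : ℝ))
      Filter.atTop (nhds γ) := htend.comp h2
  have hge : γ ≤ (convP c (2*(k+1)+1) : ℝ) / (convQ c (2*(k+1)+1) : ℝ) :=
    hanti.le_of_tendsto hsub (k+1)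
  calc γ ≤ (convP c (2*(k+1)+1) : ℝ) / (convQ c (2*(k+1)+1) : ℝ) := hge
    _ = (convP c (2*k+3) : ℝ) / (convQ c (2*k+3) : ℝ) := by
        norm_num [show 2*(k+1)+1 = 2*k+3 by ring]
    _ < (convP c (2*k+1) : ℝ) / (convQ c (2*k+1) : ℝ) := hstep k

end Between

set_option maxHeartbeats 1000000 in
theorem stmt_14 (γ : ℝ) (hγ : Irrational γ) (c : ℕ → ℤ) (hcf : IsCF γ c)
    (hc0 : c 0 = 0) (hc1 : c 1 = 1)
    (heven : ∀ n, 1 ≤ n → c (2 * n) = 1)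
    (hodd : ∀ n, 1 ≤ n → c (2 * n + 1) = 1 ∨ c (2 * n + 1) = 2)
    (m : ℕ) (hm : 0 < m)
    (hnotconv : ∀ n : ℕ,
      (⌊(m : ℝ) * γ⌋ : ℝ) / (m : ℝ) ≠ (convP c n : ℝ) / (convQ c n : ℝ)) :
    (m : ℝ) * ((m : ℝ) * γ - (⌊(m : ℝ) * γ⌋ : ℝ)) > 1 := by
  obtain ⟨hc, htend⟩ := hcf
  by_contra hcon
  push_neg at hcon
  set p : ℤ := ⌊(m : ℝ) * γ⌋ with hp
  set θ : ℝ := (m : ℝ) * γ - (p : ℝ) with hθdef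
  -- mγ is irrational
  have hirr : Irrational ((m:ℝ) * γ) := hγ.natCast_mul hm.ne'
  have hθpos : 0 < θ := by
    have h0 : 0 ≤ θ := by
      have := Int.floor_le ((m:ℝ) * γ)
      simp only [hθdef]; linarith
    rcases h0.lt_or_eq with h | h
    · exact h
    · exfalso
      exact hirr.ne_int p (by rw [hθdef] at h; linarith)
  have hmθ : (m : ℝ) * θ < 1 := by
    rcases hcon.lt_or_eq with h | h
    · exact h
    · exfalso
      have h2 : Irrational ((m:ℝ) * ((m:ℝ) * γ)) := hirr.natCast_mul hm.ne'
      apply h2.ne_int (1 + m * p)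
      push_cast
      rw [hθdef] at h
      ring_nf
      ring_nf at h
      linarith
  -- choose k with Q(2k) ≤ m < Q(2k+2)
  have hex : ∃ k : ℕ, (m : ℤ) < convQ c (2*(k+1)) := by
    refine ⟨m, ?_⟩
    have := cf_Qge c hc (2*(m+1))
    push_cast at this ⊢
    omega
  set k := Nat.find hex with hk
  have hk2 : (m : ℤ) < convQ c (2*k+2) := by
    have := Nat.find_spec hex
    rwa [show 2*(k+1) = 2*k+2 by ring] at this
  have hk1 : convQ c (2*k) ≤ (m : ℤ) := by
    rcases Nat.eq_zero_or_pos k with h | h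
    · rw [h]
      show convQ c (2*0) ≤ (m:ℤ)
      norm_num [convQ]
      exact_mod_cast hm
    · have := Nat.find_min hex (m := k-1) (by omega)
      push_neg at this
      rwa [show 2*(k-1+1) = 2*k from by omega] at this
  -- notation
  set P0 : ℤ := convP c (2*k) with hP0d
  set Q0 : ℤ := convQ c (2*k) with hQ0d
  set P1 : ℤ := convP c (2*k+1) with hP1d
  set Q1 : ℤ := convQ c (2*k+1) with hQ1d
  have hdet : P1 * Q0 - P0 * Q1 = 1 := by
    have := cf_det c (2*k)
    have hpow : ((-1:ℤ))^(2*k) = 1 := by rw [pow_mul]; norm_num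
    rw [hpow] at this
    exact this
  have hQ0pos : 1 ≤ Q0 := cf_Qpos c hc _
  have hQ1pos : 1 ≤ Q1 := cf_Qpos c hc _
  have hQ01 : Q0 ≤ Q1 := cf_Qmono c hc _
  -- theta values
  set θ0 : ℝ := (Q0 : ℝ) * γ - (P0 : ℝ) with hθ0
  set θ1 : ℝ := (Q1 : ℝ) * γ - (P1 : ℝ) with hθ1
  have hQ0R : (0:ℝ) < (Q0:ℝ) := by exact_mod_cast lt_of_lt_of_le one_pos hQ0pos
  have hQ1R : (0:ℝ) < (Q1:ℝ) := by exact_mod_cast lt_of_lt_of_le one_pos hQ1pos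
  have hθ0pos : 0 < θ0 := by
    have := cf_even_lt hc htend k
    rw [div_lt_iff₀ hQ0R] at this
    rw [hθ0]; linarith
  have hθ1neg : θ1 < 0 := by
    have := cf_odd_gt hc htend k
    rw [lt_div_iff₀ hQ1R] at this
    rw [hθ1]; linarith
  -- basis decomposition
  set a : ℤ := (m:ℤ) * P1 - p * Q1 with ha'
  set b : ℤ := p * Q0 - (m:ℤ) * P0 with hb'
  clear_value p θ k P0 Q0 P1 Q1 θ0 θ1 a b
  have ha : a * Q0 + b * Q1 = (m:ℤ) := by
    rw [ha', hb']; linear_combination (m:ℤ) * hdet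
  have hb : a * P0 + b * P1 = p := by
    rw [ha', hb']; linear_combination p * hdet
  have hθeq : θ = (a:ℝ) * θ0 + (b:ℝ) * θ1 := by
    have haR : (a:ℝ) * (Q0:ℝ) + (b:ℝ) * (Q1:ℝ) = (m:ℝ) := by exact_mod_cast ha
    have hbR : (a:ℝ) * (P0:ℝ) + (b:ℝ) * (P1:ℝ) = (p:ℝ) := by exact_mod_cast hb
    rw [hθdef, hθ0, hθ1]
    linear_combination hbR - γ * haR
  have hmpos : (1:ℤ) ≤ (m:ℤ) := by exact_mod_cast hm
  rcases lt_trichotomy b 0 with hbneg | hbzero | hbpos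
  · -- b ≤ -1
    have hbm1 : b ≤ -1 := by omega
    have hqQ0 : Q0 ≤ (m:ℤ) := hk1
    have c2 : (0:ℤ) ≤ (-b - 1) * Q1 := mul_nonneg (by linarith) (by linarith)
    have hapos : 1 ≤ a := by
      by_contra hcon2
      push_neg at hcon2
      have c4 : (0:ℤ) ≤ (-a) * Q0 := mul_nonneg (by linarith) (by linarith)
      linarith [ha, c4, c2, hQ1pos, hmpos]
    have c1 : (0:ℤ) ≤ a * ((m:ℤ) - Q0) := mul_nonneg (by linarith) (by linarith)
    have h1 : (m:ℤ) + 1 ≤ a * (m:ℤ) - Q1 + 1 := by linarith [ha, c1, c2]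
    have c3 : (0:ℤ) ≤ (-b - 1) * (m:ℤ) := mul_nonneg (by linarith) (by linarith)
    have h2 : (0:ℤ) ≤ (-b) * (m:ℤ) - Q0 := by linarith [c3, hqQ0, hmpos]
    -- 1 = θ0 * Q1 + (-θ1) * Q0
    have hdetR : (P1:ℝ) * (Q0:ℝ) - (P0:ℝ) * (Q1:ℝ) = 1 := by exact_mod_cast hdet
    have hone : θ0 * (Q1:ℝ) + (-θ1) * (Q0:ℝ) = 1 := by
      rw [hθ0, hθ1]; linear_combination hdetR
    have key : θ * (m:ℝ) - 1 = θ0 * ((a:ℝ) * (m:ℝ) - (Q1:ℝ)) + (-θ1) * ((-(b:ℝ)) * (m:ℝ) - (Q0:ℝ)) := by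
      linear_combination (m:ℝ) * hθeq + hone
    have hh1 : (1:ℝ) ≤ (a:ℝ) * (m:ℝ) - (Q1:ℝ) := by
      have h1' : (1:ℤ) ≤ a * (m:ℤ) - Q1 := by linarith [h1]
      exact_mod_cast h1'
    have hh2 : (0:ℝ) ≤ (-(b:ℝ)) * (m:ℝ) - (Q0:ℝ) := by
      have : ((0:ℤ):ℝ) ≤ ((-b * (m:ℤ) - Q0 : ℤ):ℝ) := by exact_mod_cast h2
      push_cast at this; linarith
    have t1 : (0:ℝ) < θ0 * ((a:ℝ) * (m:ℝ) - (Q1:ℝ)) :=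
      mul_pos hθ0pos (by linarith)
    have t2 : (0:ℝ) ≤ (-θ1) * ((-(b:ℝ)) * (m:ℝ) - (Q0:ℝ)) :=
      mul_nonneg (by linarith) hh2
    linarith [key, t1, t2, hmθ]
  · -- b = 0 : p/m is the convergent 2k
    refine hnotconv (2*k) ?_
    have hpq : p * Q0 = P0 * (m:ℤ) := by linear_combination hbzero - hb'
    have hmne : ((m:ℕ):ℝ) ≠ 0 := Nat.cast_ne_zero.mpr hm.ne'
    rw [← hP0d, ← hQ0d, div_eq_div_iff hmne (ne_of_gt hQ0R)]
    exact_mod_cast hpq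
  · -- b ≥ 1
    have hb1 : 1 ≤ b := hbpos
    rcases le_or_gt a 0 with haneg | hapos
    · -- θ < 0, contradiction
      have ha0 : (a:ℝ) ≤ 0 := by exact_mod_cast haneg
      have hb0 : (1:ℝ) ≤ (b:ℝ) := by exact_mod_cast hb1
      have r1 : (a:ℝ) * θ0 ≤ 0 := mul_nonpos_iff.mpr (Or.inr ⟨ha0, hθ0pos.le⟩)
      have r2 : ((b:ℝ) - 1) * θ1 ≤ 0 := mul_nonpos_iff.mpr (Or.inl ⟨by linarith, hθ1neg.le⟩)
      linarith [hθeq, r1, r2, hθpos, hθ1neg]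
    · -- q ≥ Q0 + Q1 = Q(2k+2), contradiction with hk2
      have ha1 : 1 ≤ a := hapos
      have hceven : c (2*k+2) = 1 := by
        have := heven (k+1) (by omega)
        rwa [show 2*(k+1) = 2*k+2 by ring] at this
      have hQ2 : convQ c (2*k+2) = Q0 + Q1 := by
        rw [convQ_rec, hceven, ← hQ0d, ← hQ1d]; ring
      have c5 : (0:ℤ) ≤ (a - 1) * Q0 := mul_nonneg (by linarith) (by linarith)
      have c6 : (0:ℤ) ≤ (b - 1) * Q1 := mul_nonneg (by linarith) (by linarith)
      have : Q0 + Q1 ≤ (m:ℤ) := by linarith [ha, c5, c6]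
      linarith [hk2, hQ2, this]
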